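/- Let a > 0 and S > 1. Then lim as v → 0⁺ of v · ∫ from 1 to S of dz / (v² + a log z)^{3/2} = 2/a. -/

import Mathlib

open MeasureTheory Set Filter

lemma aux_deriv (t : ℝ) (ht : 0 ≤ t) :
    HasDerivAt (fun t : ℝ => -2 * (1 + t) ^ (-(1:ℝ)/2)) (1 / (1 + t) ^ ((3:ℝ)/2)) t := by
  have h1 : (0:ℝ) < 1 + t := by linarith
  have hadd : HasDerivAt (fun t : ℝ => 1 + t) 1 t := (hasDerivAt_id t).const_add 1
  have := (Real.hasDerivAt_rpow_const (x := 1 + t) (p := -(1:ℝ)/2) (Or.inl h1.ne')).comp t hadd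
  have h2 := this.const_mul (-2 : ℝ)
  convert h2 using 1 <;> try rfl
  rw [one_div, ← Real.rpow_neg h1.le]
  ring_nf

lemma aux_tendsto : Tendsto (fun t : ℝ => -2 * (1 + t) ^ (-(1:ℝ)/2)) atTop (nhds 0) := by
  have h1 : Tendsto (fun t : ℝ => (1 + t)) atTop atTop := tendsto_atTop_add_const_left _ 1 tendsto_id
  have h2 : Tendsto (fun x : ℝ => x ^ (-((1:ℝ)/2))) atTop (nhds 0) :=
    tendsto_rpow_neg_atTop (by norm_num)
  have h3 := (h2.comp h1).const_mul (-2 : ℝ)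
  simp only [Function.comp, mul_zero] at h3
  convert h3 using 2
  norm_num

lemma aux_nonneg (t : ℝ) (ht : 0 ≤ t) : 0 ≤ 1 / (1 + t) ^ ((3:ℝ)/2) := by
  have : (0:ℝ) < 1 + t := by linarith
  positivity

lemma aux_int : ∫ t in Ioi (0:ℝ), 1 / (1 + t) ^ ((3:ℝ)/2) = 2 := by
  have := integral_Ioi_of_hasDerivAt_of_nonneg' (a := 0)
    (fun x hx => aux_deriv x hx) (fun x hx => aux_nonneg x (le_of_lt hx)) aux_tendsto
  rw [this]
  norm_num

lemma aux_integrable : IntegrableOn (fun t : ℝ => 1 / (1 + t) ^ ((3:ℝ)/2)) (Ioi 0) :=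
  integrableOn_Ioi_deriv_of_nonneg' (fun x hx => aux_deriv x hx)
    (fun x hx => aux_nonneg x (le_of_lt hx)) aux_tendsto

lemma aux_cov (a S v : ℝ) (ha : 0 < a) (hS : 1 < S) (hv : 0 < v) :
    v * ∫ z in (1:ℝ)..S, 1 / (v ^ 2 + a * Real.log z) ^ ((3:ℝ)/2)
      = ∫ t in Ioc (0:ℝ) (a * Real.log S / v ^ 2),
          Real.exp (v ^ 2 * t / a) * (1 / (1 + t) ^ ((3:ℝ)/2)) / a := by
  set T : ℝ := a * Real.log S / v ^ 2 with hTdef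
  have hlogS : 0 < Real.log S := Real.log_pos hS
  have hv2 : (0:ℝ) < v ^ 2 := by positivity
  have hT : 0 < T := by positivity
  have huIcc : uIcc (0:ℝ) T = Icc 0 T := uIcc_of_le hT.le
  set f : ℝ → ℝ := fun t => Real.exp (v ^ 2 * t / a) with hfdef
  set f' : ℝ → ℝ := fun t => Real.exp (v ^ 2 * t / a) * (v ^ 2 / a) with hf'def
  set g : ℝ → ℝ := fun u => 1 / (v ^ 2 + a * Real.log u) ^ ((3:ℝ)/2) with hgdef
  have hf : ∀ x ∈ uIcc (0:ℝ) T, HasDerivAt f (f' x) x := by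
    intro x _
    have hinner : HasDerivAt (fun t : ℝ => v ^ 2 * t / a) (v ^ 2 / a) x := by
      simpa using (((hasDerivAt_id x).const_mul (v ^ 2)).div_const a)
    exact (Real.hasDerivAt_exp _).comp x hinner
  have h' : ContinuousOn f' (uIcc (0:ℝ) T) := by fun_prop
  have hfT : f T = S := by
    have : v ^ 2 * T / a = Real.log S := by rw [hTdef]; field_simp
    simp [hfdef, this, Real.exp_log (by linarith : (0:ℝ) < S)]
  have hf0 : f 0 = 1 := by simp [hfdef]
  have himg : f '' uIcc (0:ℝ) T ⊆ Icc 1 S := by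
    rw [huIcc]
    rintro _ ⟨x, ⟨hx0, hxT⟩, rfl⟩
    constructor
    · have : (0:ℝ) ≤ v ^ 2 * x / a := by positivity
      simpa [hfdef] using Real.one_le_exp this
    · have h1 : v ^ 2 * x / a ≤ v ^ 2 * T / a := by
        gcongr
      calc f x ≤ f T := Real.exp_le_exp.mpr h1
        _ = S := hfT
  have hg : ContinuousOn g (f '' uIcc (0:ℝ) T) := by
    apply ContinuousOn.mono ?_ himg
    have hpos : ∀ u ∈ Icc (1:ℝ) S, 0 < v ^ 2 + a * Real.log u := by
      intro u hu
      have := Real.log_nonneg hu.1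
      nlinarith
    apply ContinuousOn.div continuousOn_const
    · apply ContinuousOn.rpow_const
      · apply ContinuousOn.add continuousOn_const
        apply ContinuousOn.mul continuousOn_const
        apply Real.continuousOn_log.mono
        intro u hu
        simp only [mem_compl_iff, mem_singleton_iff]
        intro h; rw [h] at hu; exact absurd hu.1 (by norm_num)
      · intro u hu
        exact Or.inl (hpos u hu).ne'
    · intro u hu
      exact (Real.rpow_pos_of_pos (hpos u hu) _).ne'
  have key := intervalIntegral.integral_comp_smul_deriv' hf h' hg
  rw [hf0, hfT] at key
  have heq : EqOn (fun x => f' x • (g ∘ f) x)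
      (fun x => (1 / v) * (Real.exp (v ^ 2 * x / a) * (1 / (1 + x) ^ ((3:ℝ)/2)) / a))
      (uIcc (0:ℝ) T) := by
    rw [huIcc]
    intro x hx
    have hx0 : (0:ℝ) ≤ x := hx.1
    have h1x : (0:ℝ) < 1 + x := by linarith
    simp only [hfdef, hf'def, hgdef, Function.comp, smul_eq_mul, Real.log_exp]
    have hden : v ^ 2 + a * (v ^ 2 * x / a) = v ^ 2 * (1 + x) := by
      field_simp
    rw [hden, Real.mul_rpow (sq_nonneg v) h1x.le]
    have hv3 : (v ^ 2 : ℝ) ^ ((3:ℝ)/2) = v ^ 3 := by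
      rw [← Real.rpow_natCast v 2, ← Real.rpow_mul hv.le, ← Real.rpow_natCast v 3]
      norm_num
    rw [hv3]
    have hne : ((1 + x) : ℝ) ^ ((3:ℝ)/2) ≠ 0 := (Real.rpow_pos_of_pos h1x _).ne'
    field_simp
  rw [← key, intervalIntegral.integral_congr heq, intervalIntegral.integral_const_mul,
    ← mul_assoc, mul_one_div, div_self hv.ne', one_mul,
    intervalIntegral.integral_of_le hT.le]

/-- The zero-initial-velocity limit in dimension two:
`v ∫₁^S dz/(v² + a log z)^{3/2} → 2/a` as `v → 0⁺`. -/
theorem zero_velocity_limit_dim_two (a S : ℝ) (ha : 0 < a) (hS : 1 < S) :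
    Filter.Tendsto
      (fun v : ℝ => v * ∫ z in (1 : ℝ)..S, 1 / (v ^ 2 + a * Real.log z) ^ ((3 : ℝ) / 2))
      (nhdsWithin 0 (Set.Ioi 0)) (nhds (2 / a)) := by
  have hlogS : 0 < Real.log S := Real.log_pos hS
  set l := nhdsWithin (0:ℝ) (Set.Ioi 0) with hl
  set T : ℝ → ℝ := fun v => a * Real.log S / v ^ 2 with hT
  set inner : ℝ → ℝ → ℝ :=
    fun v t => Real.exp (v ^ 2 * t / a) * (1 / (1 + t) ^ ((3:ℝ)/2)) / a with hinner
  set F : ℝ → ℝ → ℝ := fun v => (Ioc (0:ℝ) (T v)).indicator (inner v) with hF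
  set φ : ℝ → ℝ := (Ioi (0:ℝ)).indicator (fun t => (1 / (1 + t) ^ ((3:ℝ)/2)) / a) with hφ
  set bound : ℝ → ℝ := (Ioi (0:ℝ)).indicator
    (fun t => S * (1 / (1 + t) ^ ((3:ℝ)/2)) / a) with hbound
  have hmeas : ∀ v : ℝ, AEStronglyMeasurable (F v) volume := by
    intro v
    apply AEStronglyMeasurable.indicator _ measurableSet_Ioc
    apply Measurable.aestronglyMeasurable
    fun_prop
  have hbd : ∀ᶠ v in l, ∀ᵐ t : ℝ, ‖F v t‖ ≤ bound t := by
    filter_upwards [self_mem_nhdsWithin] with v hv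
    apply Filter.Eventually.of_forall
    intro t
    by_cases ht : t ∈ Ioc (0:ℝ) (T v)
    · have hv0 : (0:ℝ) < v := hv
      have h1t : (0:ℝ) < 1 + t := by linarith [ht.1]
      have hrp : (0:ℝ) < (1 + t) ^ ((3:ℝ)/2) := Real.rpow_pos_of_pos h1t _
      have hexp : Real.exp (v ^ 2 * t / a) ≤ S := by
        have h1 : v ^ 2 * t / a ≤ Real.log S := by
          rw [div_le_iff₀ ha]
          have h2 : t ≤ a * Real.log S / v ^ 2 := ht.2
          rw [le_div_iff₀ (by positivity : (0:ℝ) < v ^ 2)] at h2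
          nlinarith
        calc Real.exp (v ^ 2 * t / a) ≤ Real.exp (Real.log S) := Real.exp_le_exp.mpr h1
          _ = S := Real.exp_log (by linarith)
      simp only [hF, indicator_of_mem ht, hbound, indicator_of_mem (ht.1 : t ∈ Ioi 0)]
      have hnn : (0:ℝ) ≤ inner v t := by
        simp only [hinner]; positivity
      rw [Real.norm_of_nonneg hnn]
      simp only [hinner]
      rw [Set.indicator_of_mem (s := Ioi (0:ℝ)) ht.1]
      apply div_le_div_of_nonneg_right ?_ ha.le
      exact mul_le_mul_of_nonneg_right hexp (by positivity)
    · simp only [hF, indicator_of_notMem ht, norm_zero, hbound]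
      apply indicator_nonneg
      intro t' ht'
      have h1t : (0:ℝ) < 1 + t' := by have : (0:ℝ) < t' := ht'; linarith
      positivity
  have hbdint : Integrable bound := by
    rw [hbound, integrable_indicator_iff measurableSet_Ioi]
    exact (aux_integrable.const_mul S).div_const a
  have hlim : ∀ᵐ t : ℝ, Tendsto (fun v => F v t) l (nhds (φ t)) := by
    have h0 : ∀ᵐ t : ℝ, t ≠ 0 := by
      rw [ae_iff]
      have he : {x : ℝ | ¬ x ≠ 0} = {0} := by ext x; simp
      rw [he]
      exact measure_singleton 0
    filter_upwards [h0] with t ht0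
    rcases lt_or_gt_of_ne ht0 with htneg | htpos
    · have hFz : ∀ v, F v t = 0 := fun v =>
        indicator_of_notMem (fun h => absurd h.1 (by linarith)) _
      have hφz : φ t = 0 := indicator_of_notMem (by simpa using htneg.le) _
      simp only [hFz, hφz]
      exact tendsto_const_nhds
    · have hφt : φ t = (1 / (1 + t) ^ ((3:ℝ)/2)) / a := indicator_of_mem htpos _
      have hsq : Tendsto (fun v : ℝ => v ^ 2) l (nhds 0) := by
        rw [hl]
        have := ((continuous_pow 2).tendsto (0:ℝ)).mono_left
          (nhdsWithin_le_nhds (s := Set.Ioi (0:ℝ)))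
        simpa using this
      have hev : ∀ᶠ v in l, F v t = inner v t := by
        have ht' : (0:ℝ) < t := htpos
        have hc : (0:ℝ) < a * Real.log S / t := by positivity
        filter_upwards [self_mem_nhdsWithin, hsq.eventually_lt_const hc] with v hv hv2
        have hv0 : (0:ℝ) < v := hv
        apply indicator_of_mem
        constructor
        · exact htpos
        · rw [hT]
          rw [le_div_iff₀ (by positivity : (0:ℝ) < v ^ 2)]
          rw [lt_div_iff₀ htpos] at hv2
          nlinarith
      have htend : Tendsto (fun v => inner v t) l (nhds ((1 / (1 + t) ^ ((3:ℝ)/2)) / a)) := by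
        have h1 : Tendsto (fun v : ℝ => v ^ 2 * t / a) l (nhds 0) := by
          have := (hsq.mul_const t).div_const a
          simpa using this
        have h2 : Tendsto (fun v : ℝ => Real.exp (v ^ 2 * t / a)) l (nhds 1) := by
          have := (Real.continuous_exp.tendsto 0).comp h1
          simpa [Function.comp_def] using this
        have h3 := (h2.mul_const (1 / (1 + t) ^ ((3:ℝ)/2))).div_const a
        simp only [hinner]
        simpa using h3
      rw [hφt]
      exact htend.congr' (hev.mono fun v h => h.symm)
  have hcg : (l : Filter ℝ).IsCountablyGenerated := by infer_instance
  have hDCT := tendsto_integral_filter_of_dominated_convergence (μ := volume)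
    bound (Filter.Eventually.of_forall hmeas) hbd hbdint hlim
  have hφint : ∫ t : ℝ, φ t = 2 / a := by
    rw [hφ, integral_indicator measurableSet_Ioi, integral_div, aux_int]
  rw [hφint] at hDCT
  apply hDCT.congr'
  filter_upwards [self_mem_nhdsWithin] with v hv
  rw [hF, integral_indicator measurableSet_Ioc]
  exact (aux_cov a S v ha hS hv).symm
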